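/- Let X = ℓ^p(ℕ) with 1 ≤ p < ∞, fix 0 < c < c′ and a weight sequence (α_n)_{n≥1} with α_n ∈ (c, c′) for all n, and let L : X → X be the backward weighted shift L((x_n)_{n≥1}) = (α_n x_{n+1})_{n≥1}. Assume L is strongly transitive: for every nonempty open set U ⊆ X, X∖{0} ⊆ ⋃_{n=1}^∞ L^n(U). Let μ be a fully supported Borel probability measure on ℝ, let S(x) = (x_1/α_1, x_2/α_2, …), for r ∈ ℝ write r·S(x) = (r, x_1/α_1, x_2/α_2, …) ∈ ℓ^p(ℕ), and for a bounded continuous f : X → ℝ define the transfer operator L_f φ(x) = ∫_ℝ e^{f(r·S(x))} φ(r·S(x)) dμ(r). Then every conformal measure of L_f is fully supported: if ν is a Borel probability measure on X and ϱ > 0 satisfy ∫_X L_f φ dν = ϱ ∫_X φ dν for every bounded measurable φ, then ν(U) > 0 for every nonempty open set U ⊆ X. -/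

import Mathlib

open MeasureTheory
open scoped ENNReal

private lemma aux_rpow_le_iff {a b t : ℝ} (ha : 0 ≤ a) (hb : 0 ≤ b) (ht : 0 < t)
    (h : a ^ t ≤ b ^ t) : a ≤ b :=
  (Real.rpow_le_rpow_iff ha hb ht).mp h

private lemma j_norm_le (p : ℝ≥0∞) [Fact (1 ≤ p)] (hptop : p ≠ ⊤)
    (c : ℝ) (hc : 0 < c) (α : ℕ → ℝ) (hα : ∀ n, c < α n)
    (j : ℝ → lp (fun _ : ℕ => ℝ) p → lp (fun _ : ℕ => ℝ) p)
    (hj0 : ∀ r x, (j r x : ∀ _ : ℕ, ℝ) 0 = r)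
    (hjs : ∀ r x n, (j r x : ∀ _ : ℕ, ℝ) (n + 1) = (x : ∀ _ : ℕ, ℝ) n / α n)
    (r : ℝ) (x : lp (fun _ : ℕ => ℝ) p) :
    ‖j r x‖ ≤ |r| + c⁻¹ * ‖x‖ := by
  have hpt1 : (1 : ℝ) ≤ p.toReal := by
    have := ENNReal.toReal_mono hptop (Fact.out : (1:ℝ≥0∞) ≤ p)
    simpa using this
  have hpt0 : 0 < p.toReal := lt_of_lt_of_le one_pos hpt1
  set pt := p.toReal with hpt
  -- decompose
  have hdec : j r x = j r 0 + j 0 x := by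
    apply lp.ext
    funext i
    have := lp.coeFn_add (j r 0) (j 0 x)
    rw [this]
    cases i with
    | zero => simp [hj0]
    | succ n => simp [hjs, lp.coeFn_zero]
  -- norm of j r 0
  have h1 : ‖j r 0‖ = |r| := by
    have hs := lp.hasSum_norm hpt0 (j r 0)
    have hs' : HasSum (fun i => ‖(j r 0 : ∀ _ : ℕ, ℝ) i‖ ^ pt) (‖(j r 0 : ∀ _ : ℕ, ℝ) 0‖ ^ pt) := by
      apply hasSum_single 0
      intro b hb
      obtain ⟨n, rfl⟩ := Nat.exists_eq_succ_of_ne_zero hb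
      rw [hjs]
      simp [lp.coeFn_zero, Real.zero_rpow (ne_of_gt hpt0)]
    have := hs.unique hs'
    rw [hj0, Real.norm_eq_abs] at this
    have h2 := aux_rpow_le_iff (norm_nonneg _) (abs_nonneg r) hpt0 this.le
    have h3 := aux_rpow_le_iff (abs_nonneg r) (norm_nonneg _) hpt0 this.ge
    exact le_antisymm h2 h3
  -- norm of j 0 x
  have h2 : ‖j 0 x‖ ≤ c⁻¹ * ‖x‖ := by
    have hs := lp.hasSum_norm hpt0 (j 0 x)
    set w : ℕ → ℝ := fun i => Nat.casesOn i 0 (fun n => c⁻¹ ^ pt * ‖(x : ∀ _ : ℕ, ℝ) n‖ ^ pt) with hw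
    have hw0 : w 0 = 0 := rfl
    have hws : HasSum w (c⁻¹ ^ pt * ‖x‖ ^ pt) := by
      have := (lp.hasSum_norm hpt0 x).mul_left (c⁻¹ ^ pt)
      have h' : HasSum (fun n => w (n + 1)) (c⁻¹ ^ pt * ‖x‖ ^ pt) := this
      refine (hasSum_nat_add_iff' 1).mp ?_
      simpa [Finset.sum_range_one, hw0] using h'
    have hle : ∀ i, ‖(j 0 x : ∀ _ : ℕ, ℝ) i‖ ^ pt ≤ w i := by
      intro i
      cases i with
      | zero => simp [hj0, Real.zero_rpow (ne_of_gt hpt0), hw0]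
      | succ n =>
        rw [hjs]
        have hαn : 0 < α n := lt_trans hc (hα n)
        have habs : ‖(x : ∀ _ : ℕ, ℝ) n / α n‖ ≤ c⁻¹ * ‖(x : ∀ _ : ℕ, ℝ) n‖ := by
          rw [norm_div, Real.norm_eq_abs (α n), abs_of_pos hαn, mul_comm, ← div_eq_mul_inv]
          exact div_le_div_of_nonneg_left (norm_nonneg _) hc (hα n).le
        calc ‖(x : ∀ _ : ℕ, ℝ) n / α n‖ ^ pt ≤ (c⁻¹ * ‖(x : ∀ _ : ℕ, ℝ) n‖) ^ pt :=
              Real.rpow_le_rpow (norm_nonneg _) habs hpt0.le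
          _ = c⁻¹ ^ pt * ‖(x : ∀ _ : ℕ, ℝ) n‖ ^ pt :=
              Real.mul_rpow (inv_nonneg.mpr hc.le) (norm_nonneg _)
    have := hasSum_le hle hs hws
    have hrw : c⁻¹ ^ pt * ‖x‖ ^ pt = (c⁻¹ * ‖x‖) ^ pt :=
      (Real.mul_rpow (inv_nonneg.mpr hc.le) (norm_nonneg _)).symm
    rw [hrw] at this
    exact aux_rpow_le_iff (norm_nonneg _) (mul_nonneg (inv_nonneg.mpr hc.le) (norm_nonneg _)) hpt0 this
  calc ‖j r x‖ = ‖j r 0 + j 0 x‖ := by rw [← hdec]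
    _ ≤ ‖j r 0‖ + ‖j 0 x‖ := norm_add_le _ _
    _ ≤ |r| + c⁻¹ * ‖x‖ := by rw [h1]; exact add_le_add (le_refl _) h2
private lemma j_sub (p : ℝ≥0∞) [Fact (1 ≤ p)]
    (α : ℕ → ℝ)
    (j : ℝ → lp (fun _ : ℕ => ℝ) p → lp (fun _ : ℕ => ℝ) p)
    (hj0 : ∀ r x, (j r x : ∀ _ : ℕ, ℝ) 0 = r)
    (hjs : ∀ r x n, (j r x : ∀ _ : ℕ, ℝ) (n + 1) = (x : ∀ _ : ℕ, ℝ) n / α n)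
    (r r' : ℝ) (x x' : lp (fun _ : ℕ => ℝ) p) :
    j r x - j r' x' = j (r - r') (x - x') := by
  apply lp.ext
  funext i
  rw [lp.coeFn_sub]
  cases i with
  | zero => simp [hj0]
  | succ n => simp [hjs, lp.coeFn_sub, sub_div]

private lemma j_continuous (p : ℝ≥0∞) [Fact (1 ≤ p)] (hptop : p ≠ ⊤)
    (c : ℝ) (hc : 0 < c) (α : ℕ → ℝ) (hα : ∀ n, c < α n)
    (j : ℝ → lp (fun _ : ℕ => ℝ) p → lp (fun _ : ℕ => ℝ) p)
    (hj0 : ∀ r x, (j r x : ∀ _ : ℕ, ℝ) 0 = r)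
    (hjs : ∀ r x n, (j r x : ∀ _ : ℕ, ℝ) (n + 1) = (x : ∀ _ : ℕ, ℝ) n / α n) :
    Continuous (fun q : ℝ × lp (fun _ : ℕ => ℝ) p => j q.1 q.2) := by
  have key : ∀ a b : ℝ × lp (fun _ : ℕ => ℝ) p,
      dist (j a.1 a.2) (j b.1 b.2) ≤ (1 + c⁻¹) * dist a b := by
    intro a b
    rw [dist_eq_norm, j_sub p α j hj0 hjs]
    calc ‖j (a.1 - b.1) (a.2 - b.2)‖ ≤ |a.1 - b.1| + c⁻¹ * ‖a.2 - b.2‖ :=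
          j_norm_le p hptop c hc α hα j hj0 hjs _ _
      _ = dist a.1 b.1 + c⁻¹ * dist a.2 b.2 := by rw [Real.dist_eq, dist_eq_norm]
      _ ≤ dist a b + c⁻¹ * dist a b := by
          have h1 : dist a.1 b.1 ≤ dist a b := le_max_left _ _
          have h2 : dist a.2 b.2 ≤ dist a b := le_max_right _ _
          exact add_le_add h1 (mul_le_mul_of_nonneg_left h2 (inv_nonneg.mpr hc.le))
      _ = (1 + c⁻¹) * dist a b := by ring
  have hK : (0:ℝ) ≤ 1 + c⁻¹ := by positivity
  exact LipschitzWith.continuous (LipschitzWith.of_dist_le_mul (K := ⟨1 + c⁻¹, hK⟩) key)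

/-- Every conformal measure of the transfer operator of a strongly transitive
backward weighted shift on `ℓ^p(ℕ)` is fully supported. -/
theorem stmt_3
    (p : ℝ≥0∞) [Fact (1 ≤ p)] (hptop : p ≠ ⊤)
    (c c' : ℝ) (hc : 0 < c) (hcc' : c < c')
    (α : ℕ → ℝ) (hα : ∀ n, α n ∈ Set.Ioo c c')
    (L : lp (fun _ : ℕ => ℝ) p → lp (fun _ : ℕ => ℝ) p)
    (hLdef : ∀ (x : lp (fun _ : ℕ => ℝ) p) (n : ℕ), (L x : ∀ _ : ℕ, ℝ) n = α n * (x : ∀ _ : ℕ, ℝ) (n + 1))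
    (hst : ∀ U : Set (lp (fun _ : ℕ => ℝ) p), IsOpen U → U.Nonempty →
      (Set.univ \ {0} : Set (lp (fun _ : ℕ => ℝ) p)) ⊆ ⋃ n : ℕ, L^[n + 1] '' U)
    (μ : Measure ℝ) [IsProbabilityMeasure μ]
    (hμfull : ∀ V : Set ℝ, IsOpen V → V.Nonempty → 0 < μ V)
    (f : lp (fun _ : ℕ => ℝ) p → ℝ) (hfc : Continuous f) (hfb : ∃ M, ∀ x, |f x| ≤ M)
    (j : ℝ → lp (fun _ : ℕ => ℝ) p → lp (fun _ : ℕ => ℝ) p)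
    (hj0 : ∀ r x, (j r x : ∀ _ : ℕ, ℝ) 0 = r)
    (hjs : ∀ r x n, (j r x : ∀ _ : ℕ, ℝ) (n + 1) = (x : ∀ _ : ℕ, ℝ) n / α n)
    [MeasurableSpace (lp (fun _ : ℕ => ℝ) p)] [BorelSpace (lp (fun _ : ℕ => ℝ) p)]
    (Lf : (lp (fun _ : ℕ => ℝ) p → ℝ) → (lp (fun _ : ℕ => ℝ) p → ℝ))
    (hLf : ∀ φ x, Lf φ x = ∫ r, Real.exp (f (j r x)) * φ (j r x) ∂μ)
    (ν : Measure (lp (fun _ : ℕ => ℝ) p)) [IsProbabilityMeasure ν]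
    (ϱ : ℝ) (hϱ : 0 < ϱ)
    (hconf : ∀ φ : lp (fun _ : ℕ => ℝ) p → ℝ, Measurable φ → (∃ M, ∀ x, |φ x| ≤ M) →
      ∫ x, Lf φ x ∂ν = ϱ * ∫ x, φ x ∂ν) :
    ∀ U : Set (lp (fun _ : ℕ => ℝ) p), IsOpen U → U.Nonempty → 0 < ν U := by
  classical
  intro U hU hUne
  by_contra hcon
  push_neg at hcon
  have hνU : ν U = 0 := le_antisymm hcon zero_le
  obtain ⟨M, hM⟩ := hfb
  have hα' : ∀ n, c < α n := fun n => (hα n).1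
  have hJ : Continuous (fun q : ℝ × (lp (fun _ : ℕ => ℝ) p) => j q.1 q.2) :=
    j_continuous p hptop c hc α hα' j hj0 hjs
  have hJ1 : ∀ x : (lp (fun _ : ℕ => ℝ) p), Continuous fun r : ℝ => j r x := fun x =>
    hJ.comp (continuous_id.prodMk continuous_const)
  have hJ2 : ∀ r : ℝ, Continuous fun x : (lp (fun _ : ℕ => ℝ) p) => j r x := fun r =>
    hJ.comp (continuous_const.prodMk continuous_id)
  -- integrability of bounded continuous functions
  have integν : ∀ (g : (lp (fun _ : ℕ => ℝ) p) → ℝ) (B : ℝ), Continuous g → (∀ x, |g x| ≤ B) → Integrable g ν := by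
    intro g B hg hb
    exact ⟨hg.aestronglyMeasurable,
      HasFiniteIntegral.of_bounded (C := B) (Filter.Eventually.of_forall fun x => by
        simpa [Real.norm_eq_abs] using hb x)⟩
  -- the transfer operator preserves continuity, nonnegativity, boundedness, and gains positivity
  have hLf_cont : ∀ (φ : (lp (fun _ : ℕ => ℝ) p) → ℝ) (B : ℝ), Continuous φ → (∀ x, 0 ≤ φ x) → (∀ x, φ x ≤ B) →
      Continuous (Lf φ) := by
    intro φ B hφc hφ0 hφB
    have heq : Lf φ = fun x => ∫ r, Real.exp (f (j r x)) * φ (j r x) ∂μ := funext (hLf φ)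
    rw [heq]
    apply continuous_of_dominated (bound := fun _ => Real.exp M * B)
    · intro x
      exact ((Real.continuous_exp.comp (hfc.comp (hJ1 x))).mul
        (hφc.comp (hJ1 x))).aestronglyMeasurable
    · intro x
      refine Filter.Eventually.of_forall fun r => ?_
      have h1 : Real.exp (f (j r x)) ≤ Real.exp M :=
        Real.exp_le_exp.mpr ((abs_le.mp (hM _)).2)
      rw [Real.norm_eq_abs, abs_of_nonneg (mul_nonneg (Real.exp_pos _).le (hφ0 _))]
      exact mul_le_mul h1 (hφB _) (hφ0 _) (Real.exp_pos _).le
    · exact integrable_const _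
    · refine Filter.Eventually.of_forall fun r => ?_
      exact (Real.continuous_exp.comp (hfc.comp (hJ2 r))).mul (hφc.comp (hJ2 r))
  have hLf_nonneg : ∀ (φ : (lp (fun _ : ℕ => ℝ) p) → ℝ), (∀ x, 0 ≤ φ x) → ∀ x, 0 ≤ Lf φ x := by
    intro φ hφ0 x
    rw [hLf]
    exact integral_nonneg fun r => mul_nonneg (Real.exp_pos _).le (hφ0 _)
  have hLf_bdd : ∀ (φ : (lp (fun _ : ℕ => ℝ) p) → ℝ) (B : ℝ), (∀ x, 0 ≤ φ x) → (∀ x, φ x ≤ B) →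
      ∀ x, Lf φ x ≤ Real.exp M * B := by
    intro φ B hφ0 hφB x
    rw [hLf]
    have : ∀ r : ℝ, Real.exp (f (j r x)) * φ (j r x) ≤ Real.exp M * B := fun r =>
      mul_le_mul (Real.exp_le_exp.mpr ((abs_le.mp (hM _)).2)) (hφB _) (hφ0 _) (Real.exp_pos _).le
    calc ∫ r, Real.exp (f (j r x)) * φ (j r x) ∂μ
        ≤ ∫ _r, Real.exp M * B ∂μ := by
          by_cases hint : Integrable (fun r => Real.exp (f (j r x)) * φ (j r x)) μ
          · exact integral_mono hint (integrable_const _) this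
          · rw [integral_undef hint]
            have : (0:ℝ) ≤ Real.exp M * B := by
              have h0B : 0 ≤ B := le_trans (hφ0 0) (hφB 0)
              positivity
            calc (0:ℝ) ≤ Real.exp M * B := this
              _ = ∫ _r, Real.exp M * B ∂μ := by simp
      _ = Real.exp M * B := by simp
  have hLf_pos : ∀ (φ : (lp (fun _ : ℕ => ℝ) p) → ℝ) (B : ℝ), Continuous φ → (∀ x, 0 ≤ φ x) → (∀ x, φ x ≤ B) →
      ∀ (x : (lp (fun _ : ℕ => ℝ) p)) (r₀ : ℝ), 0 < φ (j r₀ x) → 0 < Lf φ x := by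
    intro φ B hφc hφ0 hφB x r₀ hpos
    rw [hLf]
    set h : ℝ → ℝ := fun r => Real.exp (f (j r x)) * φ (j r x) with hh
    have hhc : Continuous h :=
      (Real.continuous_exp.comp (hfc.comp (hJ1 x))).mul (hφc.comp (hJ1 x))
    have hh0 : ∀ r, 0 ≤ h r := fun r => mul_nonneg (Real.exp_pos _).le (hφ0 _)
    have hhr₀ : 0 < h r₀ := mul_pos (Real.exp_pos _) hpos
    set V : Set ℝ := h ⁻¹' Set.Ioi (h r₀ / 2) with hV
    have hVopen : IsOpen V := isOpen_Ioi.preimage hhc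
    have hVne : V.Nonempty := ⟨r₀, by simp [hV, Set.mem_preimage]; linarith⟩
    have hμV : 0 < μ V := hμfull V hVopen hVne
    have hVmeas : MeasurableSet V := hVopen.measurableSet
    -- integrability of h
    have hhb : ∀ r, |h r| ≤ Real.exp M * B := by
      intro r
      rw [abs_of_nonneg (hh0 r)]
      exact mul_le_mul (Real.exp_le_exp.mpr ((abs_le.mp (hM _)).2)) (hφB _) (hφ0 _)
        (Real.exp_pos _).le
    have hhint : Integrable h μ :=
      ⟨hhc.aestronglyMeasurable, HasFiniteIntegral.of_bounded (C := Real.exp M * B)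
        (Filter.Eventually.of_forall fun r => by simpa [Real.norm_eq_abs] using hhb r)⟩
    set m : ℝ → ℝ := V.indicator (fun _ => h r₀ / 2) with hm
    have hmint : Integrable m μ := (integrable_const _).indicator hVmeas
    have hmle : m ≤ h := by
      intro r
      by_cases hr : r ∈ V
      · rw [hm, Set.indicator_of_mem hr]
        exact le_of_lt (by simpa [hV, Set.mem_preimage] using hr)
      · rw [hm, Set.indicator_of_notMem hr]
        exact hh0 r
    have hintm : ∫ r, m r ∂μ = (μ V).toReal * (h r₀ / 2) := by
      rw [hm, integral_indicator_const _ hVmeas, smul_eq_mul, measureReal_def]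
    have hμVfin : (μ V).toReal > 0 :=
      ENNReal.toReal_pos (ne_of_gt hμV) (measure_ne_top μ V)
    have h1 : 0 < ∫ r, m r ∂μ := by
      rw [hintm]; positivity
    calc (0:ℝ) < ∫ r, m r ∂μ := h1
      _ ≤ ∫ r, h r ∂μ := integral_mono hmint hhint hmle
  -- the bump function
  obtain ⟨x₀, hx₀⟩ := hUne
  obtain ⟨ε, hε, hball⟩ := Metric.isOpen_iff.mp hU x₀ hx₀
  set ψ : (lp (fun _ : ℕ => ℝ) p) → ℝ := fun x => max (ε - dist x x₀) 0 with hψ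
  have hψc : Continuous ψ := (continuous_const.sub (continuous_id.dist continuous_const)).max
    continuous_const
  have hψ0 : ∀ x, 0 ≤ ψ x := fun x => le_max_right _ _
  have hψB : ∀ x, ψ x ≤ ε := fun x => max_le (by
    have := dist_nonneg (x := x) (y := x₀); linarith) hε.le
  have hψpos_iff : ∀ x, 0 < ψ x ↔ dist x x₀ < ε := by
    intro x
    constructor
    · intro h
      rcases lt_max_iff.mp h with h' | h'
      · linarith
      · exact absurd h' (lt_irrefl 0)
    · intro h
      exact lt_max_iff.mpr (Or.inl (by linarith))
  -- ψ vanishes ν-a.e.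
  have hψae : ∫ x, ψ x ∂ν = 0 := by
    apply integral_eq_zero_of_ae
    rw [Filter.EventuallyEq, ae_iff]
    apply measure_mono_null _ hνU
    intro x hx
    simp only [Set.mem_setOf_eq] at hx
    have : 0 < ψ x := lt_of_le_of_ne (hψ0 x) (by simpa [Pi.zero_apply] using (Ne.symm hx))
    exact hball ((hψpos_iff x).mp this)
  -- main induction
  have main : ∀ k : ℕ, Continuous (Lf^[k] ψ) ∧ (∀ x, 0 ≤ Lf^[k] ψ x) ∧
      (∃ B, ∀ x, Lf^[k] ψ x ≤ B) ∧ (∫ x, Lf^[k] ψ x ∂ν = 0) ∧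
      (∀ y x, 0 < ψ y → L^[k] y = x → 0 < Lf^[k] ψ x) := by
    intro k
    induction k with
    | zero =>
      refine ⟨hψc, hψ0, ⟨ε, hψB⟩, hψae, ?_⟩
      intro y x hy hyx
      simp only [Function.iterate_zero_apply] at hyx ⊢
      rwa [← hyx]
    | succ k ih =>
      obtain ⟨hcont, hnn, ⟨B, hB⟩, hint, hpos⟩ := ih
      have hstep : Lf^[k+1] ψ = Lf (Lf^[k] ψ) := Function.iterate_succ_apply' Lf k ψ
      rw [hstep]
      refine ⟨hLf_cont _ B hcont hnn hB, hLf_nonneg _ hnn, ⟨Real.exp M * B, hLf_bdd _ B hnn hB⟩,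
        ?_, ?_⟩
      · have hmeas : Measurable (Lf^[k] ψ) := hcont.measurable
        have hbdd : ∃ M', ∀ x, |Lf^[k] ψ x| ≤ M' :=
          ⟨B, fun x => by rw [abs_of_nonneg (hnn x)]; exact hB x⟩
        rw [hconf _ hmeas hbdd, hint, mul_zero]
      · intro y x hy hyx
        have hz : L (L^[k] y) = x := by
          rw [← hyx, Function.iterate_succ_apply']
        set z : (lp (fun _ : ℕ => ℝ) p) := L^[k] y with hzdef
        have hφz : 0 < Lf^[k] ψ z := hpos y z hy rfl
        set r₀ : ℝ := (z : ∀ _ : ℕ, ℝ) 0 with hr₀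
        have hjz : j r₀ x = z := by
          apply lp.ext
          funext i
          cases i with
          | zero => rw [hj0]
          | succ n =>
            rw [hjs, ← hz, hLdef]
            field_simp [ne_of_gt (lt_trans hc (hα' n))]
        exact hLf_pos _ B hcont hnn hB x r₀ (by rw [hjz]; exact hφz)
  -- the union of positivity sets is null
  have hnull : ν ({0}ᶜ : Set (lp (fun _ : ℕ => ℝ) p)) = 0 := by
    have hWn : ∀ n : ℕ, ν {x : (lp (fun _ : ℕ => ℝ) p) | Lf^[n+1] ψ x ≠ 0} = 0 := by
      intro n
      obtain ⟨hcont, hnn, ⟨B, hB⟩, hint, _⟩ := main (n+1)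
      have hinteg : Integrable (Lf^[n+1] ψ) ν :=
        integν _ B hcont fun x => by rw [abs_of_nonneg (hnn x)]; exact hB x
      have := (integral_eq_zero_iff_of_nonneg hnn hinteg).mp hint
      rw [Filter.EventuallyEq, ae_iff] at this
      exact this
    have hsub : ({0}ᶜ : Set (lp (fun _ : ℕ => ℝ) p)) ⊆ ⋃ n : ℕ, {x : (lp (fun _ : ℕ => ℝ) p) | Lf^[n+1] ψ x ≠ 0} := by
      intro x hx
      have hx' : x ∈ (Set.univ \ {0} : Set (lp (fun _ : ℕ => ℝ) p)) := ⟨trivial, hx⟩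
      have hBne : (Metric.ball x₀ ε).Nonempty := ⟨x₀, Metric.mem_ball_self hε⟩
      obtain ⟨s, ⟨n, rfl⟩, hxs⟩ := hst (Metric.ball x₀ ε) Metric.isOpen_ball hBne hx'
      obtain ⟨y, hyB, hyx⟩ := hxs
      have hψy : 0 < ψ y := (hψpos_iff y).mpr (Metric.mem_ball.mp hyB)
      have := (main (n+1)).2.2.2.2 y x hψy hyx
      exact Set.mem_iUnion.mpr ⟨n, ne_of_gt this⟩
    exact measure_mono_null hsub (measure_iUnion_null hWn)
  -- final contradiction using the indicator of the complement of {0}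
  set φ : (lp (fun _ : ℕ => ℝ) p) → ℝ := Set.indicator ({0}ᶜ : Set (lp (fun _ : ℕ => ℝ) p)) (fun _ => (1:ℝ)) with hφdef
  have hφmeas : Measurable φ :=
    measurable_const.indicator (measurableSet_singleton (0:(lp (fun _ : ℕ => ℝ) p))).compl
  have hφbdd : ∃ M', ∀ x, |φ x| ≤ M' := by
    refine ⟨1, fun x => ?_⟩
    by_cases hx : x ∈ ({0}ᶜ : Set (lp (fun _ : ℕ => ℝ) p))
    · rw [hφdef, Set.indicator_of_mem hx]; simp
    · rw [hφdef, Set.indicator_of_notMem hx]; simp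
  have hRHS : ∫ x, φ x ∂ν = 0 := by
    rw [hφdef, integral_indicator_const _ (measurableSet_singleton (0:(lp (fun _ : ℕ => ℝ) p))).compl, measureReal_def, hnull]
    simp
  have hLHS : ∫ x, Lf φ x ∂ν = Lf φ 0 := by
    have hae : ∀ᵐ x ∂ν, Lf φ x = Lf φ 0 := by
      rw [ae_iff]
      apply measure_mono_null _ hnull
      intro x hx
      simp only [Set.mem_setOf_eq] at hx
      simp only [Set.mem_compl_iff, Set.mem_singleton_iff]
      intro h0
      exact hx (by rw [h0])
    calc ∫ x, Lf φ x ∂ν = ∫ _x, Lf φ 0 ∂ν := integral_congr_ae hae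
      _ = Lf φ 0 := by simp
  have hconf' := hconf φ hφmeas hφbdd
  rw [hRHS, hLHS, mul_zero] at hconf'
  -- but Lf φ 0 > 0
  have hj00 : j 0 0 = (0 : (lp (fun _ : ℕ => ℝ) p)) := by
    apply lp.ext
    funext i
    cases i with
    | zero => rw [hj0]; simp [lp.coeFn_zero]
    | succ n => rw [hjs]; simp [lp.coeFn_zero]
  have hφj : ∀ r : ℝ, φ (j r 0) = Set.indicator ({(0:ℝ)}ᶜ) (fun _ => (1:ℝ)) r := by
    intro r
    by_cases hr : r = 0
    · subst hr
      rw [hj00, hφdef]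
      simp
    · have hjr : j r 0 ≠ (0 : (lp (fun _ : ℕ => ℝ) p)) := by
        intro h
        have h2 : (j r 0 : ∀ _ : ℕ, ℝ) 0 = ((0 : lp (fun _ : ℕ => ℝ) p) : ∀ _ : ℕ, ℝ) 0 := by
          rw [h]
        rw [hj0, lp.coeFn_zero] at h2
        exact hr (by simpa using h2)
      rw [hφdef]
      rw [Set.indicator_of_mem (by simpa using hjr), Set.indicator_of_mem (by simpa using hr)]
  have hpos0 : 0 < Lf φ 0 := by
    rw [hLf]
    set h : ℝ → ℝ := fun r => Real.exp (f (j r 0)) * φ (j r 0) with hh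
    set m : ℝ → ℝ := Set.indicator ({(0:ℝ)}ᶜ) (fun _ => Real.exp (-M)) with hm
    have hmle : m ≤ h := by
      intro r
      show m r ≤ Real.exp (f (j r 0)) * φ (j r 0)
      rw [hφj r]
      by_cases hr : r = 0
      · subst hr
        have h0 : ¬ (0:ℝ) ∈ ({(0:ℝ)}ᶜ : Set ℝ) := by simp
        rw [hm]
        simp only [Set.indicator_of_notMem h0, mul_zero, le_refl]
      · have hr' : r ∈ ({(0:ℝ)}ᶜ : Set ℝ) := by simpa using hr
        rw [hm]
        simp only [Set.indicator_of_mem hr', mul_one]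
        exact Real.exp_le_exp.mpr (neg_le_of_abs_le (hM _))
    have hmeas0 : MeasurableSet ({(0:ℝ)}ᶜ : Set ℝ) := (measurableSet_singleton 0).compl
    have hmint : Integrable m μ := (integrable_const _).indicator hmeas0
    have hhint : Integrable h μ := by
      refine ⟨?_, HasFiniteIntegral.of_bounded (C := Real.exp M)
        (Filter.Eventually.of_forall fun r => ?_)⟩
      · have hcont : Continuous fun r : ℝ => Real.exp (f (j r 0)) :=
          Real.continuous_exp.comp (hfc.comp (hJ1 0))
        have : h = fun r => Real.exp (f (j r 0)) *
            Set.indicator ({(0:ℝ)}ᶜ) (fun _ => (1:ℝ)) r := by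
          funext r
          show Real.exp (f (j r 0)) * φ (j r 0) = _
          rw [hφj r]
        rw [this]
        exact (hcont.measurable.mul
          (measurable_const.indicator hmeas0)).aestronglyMeasurable
      · show ‖Real.exp (f (j r 0)) * φ (j r 0)‖ ≤ Real.exp M
        simp only [Real.norm_eq_abs]
        rw [hφj r]
        by_cases hr : r = 0
        · subst hr
          rw [Set.indicator_of_notMem (by simp : ¬ (0:ℝ) ∈ ({(0:ℝ)}ᶜ : Set ℝ)), mul_zero]
          simp [Real.exp_pos M |>.le]
        · rw [Set.indicator_of_mem (by simpa using hr), mul_one,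
            abs_of_nonneg (Real.exp_pos _).le]
          exact Real.exp_le_exp.mpr ((abs_le.mp (hM _)).2)
    have hμ0 : 0 < μ ({(0:ℝ)}ᶜ) := by
      apply hμfull _ (isOpen_compl_singleton)
      exact ⟨1, by simp⟩
    have hintm : ∫ r, m r ∂μ = (μ ({(0:ℝ)}ᶜ)).toReal * Real.exp (-M) := by
      rw [hm, integral_indicator_const _ hmeas0, smul_eq_mul, measureReal_def]
    have hμ0fin : 0 < (μ ({(0:ℝ)}ᶜ)).toReal :=
      ENNReal.toReal_pos (ne_of_gt hμ0) (measure_ne_top μ _)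
    calc (0:ℝ) < ∫ r, m r ∂μ := by rw [hintm]; positivity
      _ ≤ ∫ r, h r ∂μ := integral_mono hmint hhint hmle
  rw [hconf'] at hpos0
  exact lt_irrefl 0 hpos0
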